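/- arXiv:math/0410351 — 2 statements merged into one kernel-verified Lean document; each statement's English description precedes it below -/
import Mathlib

section
/- Let φ = (φ₁,…,φ_k) : 𝔻^k → 𝔻̄^k be an analytic map inducing a composition operator C_φ : A⁺(𝕋^k) → A⁺(𝕋^k). Then C_φ is an isometry (‖f∘φ‖_{A⁺(𝕋^k)} = ‖f‖_{A⁺(𝕋^k)} for every f ∈ A⁺(𝕋^k)) if and only if there exist a k×k matrix A = (a_{ij}) with entries a_{ij} ∈ ℕ₀ and det A ≠ 0, and complex numbers ε₁,…,ε_k of modulus 1, such that φ_i(z) = ε_i z₁^{a_{i1}}⋯z_k^{a_{ik}} for 1 ≤ i ≤ k and all z ∈ 𝔻^k. -/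
open Complex Filter
open scoped ENNReal

noncomputable section

/-- The Banach space `ℓ¹(ℕ₀^k)` of Taylor coefficient families, modelling the Wiener
algebra `A⁺(𝕋^k)`; the `A⁺(𝕋^k)`-norm is the `ℓ¹`-norm. -/
abbrev Coeffk (k : ℕ) := lp (fun _ : Fin k → ℕ => ℂ) 1

namespace Aux13



/-- One-variable uniqueness of power series coefficients (ℓ¹ coefficients). -/
lemma one_dim_unique (a : ℕ → ℂ) (ha : Summable fun n => ‖a n‖)
    (h : ∀ z : ℂ, ‖z‖ < 1 → ∑' n, a n * z ^ n = 0) : ∀ m, a m = 0 := by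
  set C : ℝ := ∑' n, ‖a n‖ with hC
  have hC0 : 0 ≤ C := tsum_nonneg fun n => norm_nonneg _
  have hshift : ∀ m, Summable fun n => ‖a (n + m)‖ :=
    fun m => ha.comp_injective (add_left_injective m)
  set tail : ℕ → ℂ → ℂ := fun m z => ∑' n, a (n + m) * z ^ n with htail
  have hsumm : ∀ m (z : ℂ), ‖z‖ ≤ 1 → Summable fun n => a (n + m) * z ^ n := by
    intro m z hz
    refine Summable.of_norm (Summable.of_nonneg_of_le (fun n => norm_nonneg _) (fun n => ?_)
      (hshift m))
    rw [norm_mul]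
    calc ‖a (n + m)‖ * ‖z ^ n‖ ≤ ‖a (n + m)‖ * 1 := by
          refine mul_le_mul_of_nonneg_left ?_ (norm_nonneg _)
          rw [norm_pow]
          exact pow_le_one₀ (norm_nonneg _) (by exact hz)
      _ = ‖a (n + m)‖ := mul_one _
  have hbound : ∀ m (z : ℂ), ‖z‖ ≤ 1 → ‖tail m z‖ ≤ C := by
    intro m z hz
    refine le_trans (norm_tsum_le_tsum_norm ?_) ?_
    · refine Summable.of_nonneg_of_le (fun n => norm_nonneg _) (fun n => ?_) (hshift m)
      rw [norm_mul, norm_pow]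
      calc ‖a (n+m)‖ * ‖z‖ ^ n ≤ ‖a (n+m)‖ * 1 := by
            refine mul_le_mul_of_nonneg_left ?_ (norm_nonneg _)
            exact pow_le_one₀ (norm_nonneg _) (by exact hz)
        _ = ‖a (n+m)‖ := mul_one _
    · refine le_trans (Summable.tsum_le_tsum (fun n => ?_) ?_ (hshift m)) ?_
      · rw [norm_mul, norm_pow]
        calc ‖a (n+m)‖ * ‖z‖ ^ n ≤ ‖a (n+m)‖ * 1 := by
              refine mul_le_mul_of_nonneg_left ?_ (norm_nonneg _)
              exact pow_le_one₀ (norm_nonneg _) (by exact hz)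
          _ = ‖a (n+m)‖ := mul_one _
      · exact Summable.of_nonneg_of_le (fun n => norm_nonneg _) (fun n => by
          rw [norm_mul, norm_pow]
          calc ‖a (n+m)‖ * ‖z‖ ^ n ≤ ‖a (n+m)‖ * 1 := by
                refine mul_le_mul_of_nonneg_left ?_ (norm_nonneg _)
                exact pow_le_one₀ (norm_nonneg _) (by exact hz)
            _ = ‖a (n+m)‖ := mul_one _) (hshift m)
      · exact Summable.tsum_le_tsum_of_inj (· + m) (add_left_injective m)
          (fun c _ => norm_nonneg _) (fun n => le_refl _) (hshift m) ha
  have hrec : ∀ m (z : ℂ), ‖z‖ ≤ 1 → tail m z = a m + z * tail (m + 1) z := by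
    intro m z hz
    have h1 : tail m z = a (0 + m) * z ^ 0 + ∑' n, a (n + 1 + m) * z ^ (n + 1) :=
      Summable.tsum_eq_zero_add (hsumm m z hz)
    rw [h1]
    have h2 : ∀ n : ℕ, a (n + 1 + m) * z ^ (n + 1) = z * (a (n + (m + 1)) * z ^ n) := by
      intro n
      rw [show n + 1 + m = n + (m + 1) by omega, pow_succ]
      ring
    rw [tsum_congr h2, tsum_mul_left]
    simp [htail]
  -- the inductive invariant
  have key : ∀ m, (∀ z : ℂ, z ≠ 0 → ‖z‖ < 1/2 → tail m z = 0) →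
      a m = 0 ∧ (∀ z : ℂ, z ≠ 0 → ‖z‖ < 1/2 → tail (m+1) z = 0) := by
    intro m hQ
    have heq : ∀ z : ℂ, z ≠ 0 → ‖z‖ < 1/2 → a m = - (z * tail (m+1) z) := by
      intro z hz0 hz
      have := hrec m z (le_of_lt (lt_trans hz (by norm_num)))
      rw [hQ z hz0 hz] at this
      linear_combination -this
    have ham : a m = 0 := by
      by_contra hne
      have hpos : 0 < ‖a m‖ := norm_pos_iff.mpr hne
      set t : ℝ := ‖a m‖ / (2 * C + 1) with ht
      have htpos : 0 < t := div_pos hpos (by linarith)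
      have hamC : ‖a m‖ ≤ C := by
        rw [hC]
        exact Summable.le_tsum ha m (fun n _ => norm_nonneg _)
      have htlt : t < 1/2 := by
        rw [ht, div_lt_iff₀ (by linarith : (0:ℝ) < 2 * C + 1)]
        nlinarith
      have hz0 : (t : ℂ) ≠ 0 := by
        simpa using ne_of_gt htpos
      have habs : ‖(t : ℂ)‖ < 1/2 := by
        rw [Complex.norm_real, Real.norm_eq_abs, abs_of_pos htpos]; exact htlt
      have := heq (t : ℂ) hz0 habs
      have hb : ‖a m‖ ≤ t * C := by
        rw [this, norm_neg, norm_mul]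
        have : ‖(t:ℂ)‖ = t := by
          rw [Complex.norm_real, Real.norm_eq_abs, abs_of_pos htpos]
        rw [this]
        exact mul_le_mul_of_nonneg_left
          (hbound (m+1) _ (le_of_lt (lt_trans habs (by norm_num)))) (le_of_lt htpos)
      rw [ht] at hb
      have h2C : (0:ℝ) < 2 * C + 1 := by linarith
      rw [div_mul_eq_mul_div, le_div_iff₀ h2C] at hb
      nlinarith
    refine ⟨ham, fun z hz0 hz => ?_⟩
    have h0 := heq z hz0 hz
    rw [ham] at h0
    have h1 : z * tail (m+1) z = 0 := neg_eq_zero.mp h0.symm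
    rcases mul_eq_zero.mp h1 with h | h
    · exact absurd h hz0
    · exact h
  have hQ0 : ∀ z : ℂ, z ≠ 0 → ‖z‖ < 1/2 → tail 0 z = 0 := by
    intro z _ hz
    have : tail 0 z = ∑' n, a n * z ^ n := tsum_congr fun n => by rw [Nat.add_zero]
    rw [this]
    exact h z (lt_trans hz (by norm_num))
  have hQ : ∀ m, ∀ z : ℂ, z ≠ 0 → ‖z‖ < 1/2 → tail m z = 0 := by
    intro m
    induction m with
    | zero => exact hQ0
    | succ n ih => exact (key n ih).2
  intro m
  exact (key m (hQ m)).1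




/-- norm of a monomial term bound -/
lemma prod_pow_le_one {k : ℕ} (z : Fin k → ℂ) (hz : ∀ i, ‖(z i)‖ ≤ 1)
    (β : Fin k → ℕ) : ‖∏ i, z i ^ β i‖ ≤ 1 := by
  rw [norm_prod]
  refine Finset.prod_le_one (fun i _ => norm_nonneg _) (fun i _ => ?_)
  rw [norm_pow]
  exact pow_le_one₀ (norm_nonneg _) (by simpa using hz i)

lemma term_norm_le {k : ℕ} (c : (Fin k → ℕ) → ℂ) (z : Fin k → ℂ)
    (hz : ∀ i, ‖(z i)‖ ≤ 1) (β : Fin k → ℕ) :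
    ‖c β * ∏ i, z i ^ β i‖ ≤ ‖c β‖ := by
  rw [norm_mul]
  calc ‖c β‖ * ‖∏ i, z i ^ β i‖ ≤ ‖c β‖ * 1 :=
        mul_le_mul_of_nonneg_left (prod_pow_le_one z hz β) (norm_nonneg _)
    _ = ‖c β‖ := mul_one _

lemma summable_term {k : ℕ} (c : (Fin k → ℕ) → ℂ) (hc : Summable fun β => ‖c β‖)
    (z : Fin k → ℂ) (hz : ∀ i, ‖(z i)‖ ≤ 1) :
    Summable fun β => c β * ∏ i, z i ^ β i :=
  Summable.of_norm (Summable.of_nonneg_of_le (fun _ => norm_nonneg _)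
    (term_norm_le c z hz) hc)

/-- Multivariate uniqueness of power-series coefficients. -/
lemma multi_unique : ∀ (k : ℕ) (c : (Fin k → ℕ) → ℂ), (Summable fun β => ‖c β‖) →
    (∀ z : Fin k → ℂ, (∀ i, ‖(z i)‖ < 1) →
      ∑' β : Fin k → ℕ, c β * ∏ i, z i ^ β i = 0) →
    ∀ β, c β = 0 := by
  intro k
  induction k with
  | zero =>
    intro c _ h β
    have hz : ∀ i : Fin 0, ‖((fun j : Fin 0 => (0:ℂ)) i)‖ < 1 := fun i => i.elim0
    have := h (fun _ => 0) hz
    rw [tsum_eq_single β (fun b' hb' => absurd (Subsingleton.elim b' β) hb')] at this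
    simpa using this
  | succ k ih =>
    intro c hc h
    set e : ℕ × (Fin k → ℕ) ≃ (Fin (k+1) → ℕ) := Fin.consEquiv (fun _ => ℕ) with he
    have hep : ∀ p : ℕ × (Fin k → ℕ), e p = Fin.cons p.1 p.2 := fun p => rfl
    have hprod : Summable fun p : ℕ × (Fin k → ℕ) => ‖c (Fin.cons p.1 p.2)‖ := by
      have := (e.summable_iff (f := fun β => ‖c β‖)).mpr hc
      exact this
    have hslices := (summable_prod_of_nonneg
      (fun p => norm_nonneg _)).mp hprod
    -- fix w in the k-polydisc
    have main : ∀ (n : ℕ) (w : Fin k → ℂ), (∀ i, ‖(w i)‖ < 1) →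
        ∑' β : Fin k → ℕ, c (Fin.cons n β) * ∏ i, w i ^ β i = 0 := by
      intro n w hw
      have hw1 : ∀ i, ‖(w i)‖ ≤ 1 := fun i => le_of_lt (hw i)
      set d : ℕ → ℂ := fun n => ∑' β : Fin k → ℕ, c (Fin.cons n β) * ∏ i, w i ^ β i with hd
      have hdb : ∀ n, ‖d n‖ ≤ ∑' β : Fin k → ℕ, ‖c (Fin.cons n β)‖ := by
        intro n
        refine le_trans (norm_tsum_le_tsum_norm ?_) ?_
        · exact Summable.of_nonneg_of_le (fun _ => norm_nonneg _)
            (term_norm_le (fun β => c (Fin.cons n β)) w hw1) (hslices.1 n)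
        · exact Summable.tsum_le_tsum (term_norm_le (fun β => c (Fin.cons n β)) w hw1)
            (Summable.of_nonneg_of_le (fun _ => norm_nonneg _)
              (term_norm_le (fun β => c (Fin.cons n β)) w hw1) (hslices.1 n))
            (hslices.1 n)
      have hdsum : Summable fun n => ‖d n‖ :=
        Summable.of_nonneg_of_le (fun _ => norm_nonneg _) hdb hslices.2
      have hseries : ∀ z₀ : ℂ, ‖z₀‖ < 1 → ∑' n, d n * z₀ ^ n = 0 := by
        intro z₀ hz₀
        set z : Fin (k+1) → ℂ := Fin.cons z₀ w with hzdef
        have hzD : ∀ i, ‖(z i)‖ < 1 := by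
          intro i
          refine Fin.cases ?_ ?_ i
          · simpa [hzdef] using hz₀
          · intro j; simpa [hzdef] using hw j
        have hz1 : ∀ i, ‖(z i)‖ ≤ 1 := fun i => le_of_lt (hzD i)
        -- summability of the full double family
        have hF : Summable fun p : ℕ × (Fin k → ℕ) =>
            c (Fin.cons p.1 p.2) * (∏ i, w i ^ p.2 i) * z₀ ^ p.1 := by
          refine Summable.of_norm (Summable.of_nonneg_of_le (fun _ => norm_nonneg _)
            (fun p => ?_) hprod)
          have h1 : ‖c (Fin.cons p.1 p.2) * (∏ i, w i ^ p.2 i) * z₀ ^ p.1‖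
              = ‖c (Fin.cons p.1 p.2) * ∏ i, z i ^ (Fin.cons p.1 p.2 : Fin (k+1) → ℕ) i‖ := by
            rw [Fin.prod_univ_succ]
            simp only [Fin.cons_zero, Fin.cons_succ, hzdef]
            ring_nf
          rw [h1]
          exact term_norm_le c z hz1 _
        have hFs : ∀ n : ℕ, Summable fun β : Fin k → ℕ =>
            c (Fin.cons n β) * (∏ i, w i ^ β i) * z₀ ^ n := by
          intro n
          refine Summable.mul_right _ ?_
          exact summable_term (fun β => c (Fin.cons n β)) (hslices.1 n) w hw1
        calc ∑' n, d n * z₀ ^ n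
            = ∑' n, ∑' β : Fin k → ℕ, c (Fin.cons n β) * (∏ i, w i ^ β i) * z₀ ^ n := by
              refine tsum_congr fun n => ?_
              rw [hd]
              rw [← tsum_mul_right]
          _ = ∑' p : ℕ × (Fin k → ℕ), c (Fin.cons p.1 p.2) * (∏ i, w i ^ p.2 i) * z₀ ^ p.1 :=
              (Summable.tsum_prod' hF hFs).symm
          _ = ∑' β : Fin (k+1) → ℕ, c β * ∏ i, z i ^ β i := by
              rw [← e.tsum_eq (f := fun β : Fin (k+1) → ℕ => c β * ∏ i, z i ^ β i)]
              refine tsum_congr fun p => ?_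
              rw [hep]
              rw [Fin.prod_univ_succ]
              simp only [Fin.cons_zero, Fin.cons_succ, hzdef]
              ring
          _ = 0 := h z hzD
      -- apply the 1-D lemma
      exact one_dim_unique d hdsum hseries n
    intro β
    have h0 : ∀ n, ∀ γ : Fin k → ℕ, c (Fin.cons n γ) = 0 := by
      intro n
      refine ih (fun γ => c (Fin.cons n γ)) ?_ (fun w hw => main n w hw)
      exact hslices.1 n
    have := h0 (β 0) (Fin.tail β)
    rwa [Fin.cons_self_tail] at this




variable {k : ℕ}

abbrev PP (k : ℕ) := Fin k → ℕ

abbrev Fiber (γ : PP k) := {p : PP k × PP k // p.1 + p.2 = γ}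

/-- convolution of coefficient families (ℂ version) -/
def conv (x y : PP k → ℂ) (γ : PP k) : ℂ := ∑' p : Fiber γ, x p.1.1 * y p.1.2

/-- convolution (ℝ version) -/
def convR (x y : PP k → ℝ) (γ : PP k) : ℝ := ∑' p : Fiber γ, x p.1.1 * y p.1.2

lemma summable_prod_norm {x y : PP k → ℂ} (hx : Summable fun β => ‖x β‖)
    (hy : Summable fun β => ‖y β‖) :
    Summable fun p : PP k × PP k => ‖x p.1 * y p.2‖ := by
  simpa [norm_mul] using hx.mul_of_nonneg hy (fun _ => norm_nonneg _) (fun _ => norm_nonneg _)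

def addEquiv (k : ℕ) : (Σ γ : PP k, Fiber γ) ≃ PP k × PP k :=
  Equiv.sigmaFiberEquiv (fun p : PP k × PP k => p.1 + p.2)

lemma summable_comp_addEquiv {f : PP k × PP k → ℝ} (h : Summable f) :
    Summable fun s : Σ γ : PP k, Fiber γ => f s.2.1 :=
  h.comp_injective (addEquiv k).injective

lemma tsum_comp_addEquiv (f : PP k × PP k → ℂ) :
    ∑' s : Σ γ : PP k, Fiber γ, f s.2.1 = ∑' p, f p :=
  (addEquiv k).tsum_eq f

lemma tsum_comp_addEquivR (f : PP k × PP k → ℝ) :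
    ∑' s : Σ γ : PP k, Fiber γ, f s.2.1 = ∑' p, f p :=
  (addEquiv k).tsum_eq f

lemma summable_comp_addEquivC {f : PP k × PP k → ℂ} (h : Summable f) :
    Summable fun s : Σ γ : PP k, Fiber γ => f s.2.1 :=
  h.comp_injective (addEquiv k).injective

lemma convR_eq_norm_tsum {x y : PP k → ℂ} (hx : Summable fun β => ‖x β‖)
    (hy : Summable fun β => ‖y β‖) (γ : PP k) :
    ‖conv x y γ‖ ≤ convR (fun β => ‖x β‖) (fun β => ‖y β‖) γ := by
  unfold conv convR
  refine le_trans (norm_tsum_le_tsum_norm ?_) (le_of_eq (tsum_congr fun p => norm_mul _ _))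
  exact ((summable_prod_norm hx hy).subtype _)

lemma convR_nonneg (x y : PP k → ℝ) (hx : ∀ β, 0 ≤ x β) (hy : ∀ β, 0 ≤ y β) (γ : PP k) :
    0 ≤ convR x y γ :=
  tsum_nonneg fun p => mul_nonneg (hx _) (hy _)

lemma convR_single_le {x y : PP k → ℝ} (hx : ∀ β, 0 ≤ x β) (hy : ∀ β, 0 ≤ y β)
    (hxs : Summable x) (hys : Summable y) (β γ : PP k) :
    x β * y γ ≤ convR x y (β + γ) := by
  unfold convR
  have hsum : Summable fun p : Fiber (β + γ) => x p.1.1 * y p.1.2 := by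
    have := (hxs.mul_of_nonneg hys hx hy).subtype
      {p : PP k × PP k | p.1 + p.2 = β + γ}
    exact this
  exact Summable.le_tsum hsum ⟨(β, γ), rfl⟩ (fun p _ => mul_nonneg (hx _) (hy _))

lemma convR_summable {x y : PP k → ℝ} (hx : ∀ β, 0 ≤ x β) (hy : ∀ β, 0 ≤ y β)
    (hxs : Summable x) (hys : Summable y) :
    Summable fun γ => convR x y γ := by
  have h := hxs.mul_of_nonneg hys hx hy
  exact (summable_comp_addEquiv (f := fun p : PP k × PP k => x p.1 * y p.2) h).sigma

lemma convR_tsum {x y : PP k → ℝ} (hx : ∀ β, 0 ≤ x β) (hy : ∀ β, 0 ≤ y β)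
    (hxs : Summable x) (hys : Summable y) :
    ∑' γ, convR x y γ = (∑' β, x β) * (∑' β, y β) := by
  have h := hxs.mul_of_nonneg hys hx hy
  have hs : Summable fun s : Σ γ : PP k, Fiber γ => x s.2.1.1 * y s.2.1.2 :=
    summable_comp_addEquiv (f := fun p : PP k × PP k => x p.1 * y p.2) h
  have hs : Summable fun s : Σ γ : PP k, Fiber γ => x s.2.1.1 * y s.2.1.2 :=
    summable_comp_addEquiv (f := fun p : PP k × PP k => x p.1 * y p.2) h
  calc ∑' γ, convR x y γ = ∑' s : Σ γ : PP k, Fiber γ, x s.2.1.1 * y s.2.1.2 :=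
        (Summable.tsum_sigma hs).symm
    _ = ∑' p : PP k × PP k, x p.1 * y p.2 :=
        tsum_comp_addEquivR (fun p => x p.1 * y p.2)
    _ = (∑' β, x β) * (∑' β, y β) := by
        have hx' : (fun β => ‖x β‖) = x := funext fun β => by
          rw [Real.norm_eq_abs, _root_.abs_of_nonneg (hx β)]
        have hy' : (fun β => ‖y β‖) = y := funext fun β => by
          rw [Real.norm_eq_abs, _root_.abs_of_nonneg (hy β)]
        have hxs' : Summable fun β => ‖x β‖ := by rw [hx']; exact hxs
        have hys' : Summable fun β => ‖y β‖ := by rw [hy']; exact hys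
        rw [tsum_mul_tsum_of_summable_norm hxs' hys']

/-- Cauchy product: product of the two power series equals series of conv. -/
lemma conv_series {x y : PP k → ℂ} (hx : Summable fun β => ‖x β‖)
    (hy : Summable fun β => ‖y β‖) (z : Fin k → ℂ) (hz : ∀ i, ‖(z i)‖ ≤ 1) :
    (∑' β, x β * ∏ i, z i ^ β i) * (∑' β, y β * ∏ i, z i ^ β i)
      = ∑' γ, conv x y γ * ∏ i, z i ^ γ i := by
  have hb : ∀ β : PP k, ‖∏ i, z i ^ β i‖ ≤ 1 := by
    intro β
    rw [norm_prod]
    refine Finset.prod_le_one (fun i _ => norm_nonneg _) (fun i _ => ?_)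
    rw [norm_pow]
    exact pow_le_one₀ (norm_nonneg _) (by simpa using hz i)
  have hxz : Summable fun β => ‖x β * ∏ i, z i ^ β i‖ :=
    Summable.of_nonneg_of_le (fun _ => norm_nonneg _)
      (fun β => by
        rw [norm_mul]
        calc ‖x β‖ * ‖∏ i, z i ^ β i‖ ≤ ‖x β‖ * 1 :=
              mul_le_mul_of_nonneg_left (hb β) (norm_nonneg _)
          _ = ‖x β‖ := mul_one _) hx
  have hyz : Summable fun β => ‖y β * ∏ i, z i ^ β i‖ :=
    Summable.of_nonneg_of_le (fun _ => norm_nonneg _)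
      (fun β => by
        rw [norm_mul]
        calc ‖y β‖ * ‖∏ i, z i ^ β i‖ ≤ ‖y β‖ * 1 :=
              mul_le_mul_of_nonneg_left (hb β) (norm_nonneg _)
          _ = ‖y β‖ := mul_one _) hy
  rw [tsum_mul_tsum_of_summable_norm hxz hyz]
  -- reindex over sigma
  have hsum_prod : Summable fun p : PP k × PP k =>
      (x p.1 * ∏ i, z i ^ p.1 i) * (y p.2 * ∏ i, z i ^ p.2 i) := by
    refine Summable.of_norm ?_
    refine Summable.of_nonneg_of_le (fun _ => norm_nonneg _) (fun p => ?_)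
      (summable_prod_norm hx hy)
    rw [norm_mul, norm_mul, norm_mul, norm_mul]
    calc ‖x p.1‖ * ‖∏ i, z i ^ p.1 i‖ * (‖y p.2‖ * ‖∏ i, z i ^ p.2 i‖)
        ≤ ‖x p.1‖ * 1 * (‖y p.2‖ * 1) := by
          gcongr
          exacts [hb _, hb _]
      _ = ‖x p.1‖ * ‖y p.2‖ := by ring
  have hsig : Summable fun s : Σ γ : PP k, Fiber γ =>
      (x s.2.1.1 * ∏ i, z i ^ s.2.1.1 i) * (y s.2.1.2 * ∏ i, z i ^ s.2.1.2 i) :=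
    summable_comp_addEquivC (f := fun p : PP k × PP k =>
      (x p.1 * ∏ i, z i ^ p.1 i) * (y p.2 * ∏ i, z i ^ p.2 i)) hsum_prod
  calc ∑' p : PP k × PP k, (x p.1 * ∏ i, z i ^ p.1 i) * (y p.2 * ∏ i, z i ^ p.2 i)
      = ∑' s : Σ γ : PP k, Fiber γ,
          (x s.2.1.1 * ∏ i, z i ^ s.2.1.1 i) * (y s.2.1.2 * ∏ i, z i ^ s.2.1.2 i) :=
        (tsum_comp_addEquiv (fun p : PP k × PP k =>
          (x p.1 * ∏ i, z i ^ p.1 i) * (y p.2 * ∏ i, z i ^ p.2 i))).symm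
    _ = ∑' γ, conv x y γ * ∏ i, z i ^ γ i := by
        rw [Summable.tsum_sigma hsig]
        refine tsum_congr fun γ => ?_
        unfold conv
        rw [← tsum_mul_right]
        refine tsum_congr fun p => ?_
        have hpz : (∏ i, z i ^ p.1.1 i) * (∏ i, z i ^ p.1.2 i) = ∏ i, z i ^ γ i := by
          rw [← Finset.prod_mul_distrib]
          refine Finset.prod_congr rfl fun i _ => ?_
          rw [← pow_add]
          congr 1
          have := p.2
          calc p.1.1 i + p.1.2 i = (p.1.1 + p.1.2) i := rfl
            _ = γ i := by rw [this]
        calc (x p.1.1 * ∏ i, z i ^ p.1.1 i) * (y p.1.2 * ∏ i, z i ^ p.1.2 i)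
            = x p.1.1 * y p.1.2 * ((∏ i, z i ^ p.1.1 i) * (∏ i, z i ^ p.1.2 i)) := by ring
          _ = x p.1.1 * y p.1.2 * ∏ i, z i ^ γ i := by rw [hpz]






lemma coeffk_summable {k : ℕ} (x : Coeffk k) : Summable fun β => ‖x β‖ := by
  have := (lp.memℓp x).summable (p := 1) (by norm_num)
  simpa using this

lemma coeffk_norm {k : ℕ} (x : Coeffk k) : ‖x‖ = ∑' β, ‖x β‖ := by
  rw [lp.norm_eq_tsum_rpow (by norm_num) x]; simp

/-- two absolutely convergent power series on the polydisc with the same sum have the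
same coefficients -/
lemma two_series_unique {k : ℕ} (c d : PP k → ℂ) (hc : Summable fun β => ‖c β‖)
    (hd : Summable fun β => ‖d β‖)
    (h : ∀ z : Fin k → ℂ, (∀ i, ‖(z i)‖ < 1) →
      ∑' β : PP k, c β * ∏ i, z i ^ β i = ∑' β : PP k, d β * ∏ i, z i ^ β i) :
    ∀ β, c β = d β := by
  intro β
  have h0 := multi_unique k (fun β => c β - d β) ?_ ?_ β
  · exact sub_eq_zero.mp h0
  · have : Summable fun β => c β - d β := (hc.of_norm).sub (hd.of_norm)
    exact summable_norm_iff.mpr this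
  · intro z hz
    have hz1 : ∀ i, ‖(z i)‖ ≤ 1 := fun i => (hz i).le
    have : ∑' β : PP k, (c β - d β) * ∏ i, z i ^ β i
        = ∑' β : PP k, c β * ∏ i, z i ^ β i - ∑' β : PP k, d β * ∏ i, z i ^ β i := by
      rw [← Summable.tsum_sub (summable_term c hc z hz1) (summable_term d hd z hz1)]
      exact tsum_congr fun β => by ring
    rw [this, h z hz, sub_self]

/-- if `‖u+v‖` and `‖u-v‖` both equal `‖u‖+‖v‖` then `u = 0` or `v = 0`. -/
lemma abs_cancel (u v : ℂ) (h1 : ‖u + v‖ = ‖u‖ + ‖v‖)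
    (h2 : ‖u - v‖ = ‖u‖ + ‖v‖) : u = 0 ∨ v = 0 := by
  have e1 : Complex.normSq (u + v) + Complex.normSq (u - v)
      = 2 * Complex.normSq u + 2 * Complex.normSq v := by
    simp only [Complex.normSq_apply, Complex.add_re, Complex.add_im, Complex.sub_re,
      Complex.sub_im]
    ring
  have nu : ‖u‖ ^ 2 = Complex.normSq u := by rw [Complex.sq_norm]
  have nv : ‖v‖ ^ 2 = Complex.normSq v := by rw [Complex.sq_norm]
  have nuv : ‖u + v‖ ^ 2 = Complex.normSq (u + v) := by
    rw [Complex.sq_norm]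
  have nuv' : ‖u - v‖ ^ 2 = Complex.normSq (u - v) := by
    rw [Complex.sq_norm]
  have key : ‖u‖ * ‖v‖ = 0 := by nlinarith [norm_nonneg u, norm_nonneg v]
  rcases mul_eq_zero.mp key with h | h
  · exact Or.inl (norm_eq_zero.mp h)
  · exact Or.inr (norm_eq_zero.mp h)

/-- clear denominators of a rational family -/
lemma intify {m : ℕ} (c : Fin m → ℚ) :
    ∃ (z : Fin m → ℤ) (N : ℕ), 0 < N ∧ ∀ i, (z i : ℚ) = N * c i := by
  set N : ℕ := ∏ j, (c j).den with hN
  have hNpos : 0 < N := Finset.prod_pos fun j _ => (c j).pos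
  refine ⟨fun i => (c i).num * (N / (c i).den : ℕ), N, hNpos, fun i => ?_⟩
  have hdvd : (c i).den ∣ N := Finset.dvd_prod_of_mem _ (Finset.mem_univ i)
  obtain ⟨t, ht⟩ := hdvd
  have htq : ((N / (c i).den : ℕ) : ℚ) = (t : ℚ) := by
    rw [ht, Nat.mul_div_cancel_left _ (c i).pos]
  have step1 : (((c i).num * (N / (c i).den : ℕ) : ℤ) : ℚ)
      = ((c i).num : ℚ) * ((N / (c i).den : ℕ) : ℚ) := by
    rw [Int.cast_mul, Int.cast_natCast]
  rw [step1, htq]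
  have hc : ((c i).num : ℚ) = c i * (c i).den := by
    have hden : ((c i).den : ℚ) ≠ 0 := by exact_mod_cast (c i).den_ne_zero
    rw [eq_comm]
    field_simp
    exact Rat.mul_den_eq_num (c i)
  rw [hc, ht]
  push_cast
  ring




lemma single_coe {k : ℕ} (α β : PP k) :
    (lp.single 1 α (1:ℂ) : PP k → ℂ) β = if β = α then 1 else 0 := by
  classical
  rw [lp.single_apply]
  by_cases h : β = α <;> simp [h]

lemma tsum_pointwise_eq {ι : Type*} (f h : ι → ℝ) (hle : ∀ i, f i ≤ h i)
    (hf : Summable f) (hh : Summable h) (heq : ∑' i, f i = ∑' i, h i) : ∀ i, f i = h i := by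
  intro i
  by_contra hne
  exact absurd heq (ne_of_lt (Summable.tsum_lt_tsum hle (lt_of_le_of_ne (hle i) hne) hf hh))

lemma forward_dir (k : ℕ) (φ : (Fin k → ℂ) → (Fin k → ℂ))
    (T : Coeffk k →L[ℂ] Coeffk k)
    (hT : ∀ (a : Coeffk k) (z : Fin k → ℂ), (∀ i, ‖(z i)‖ < 1) →
      ∑' α : Fin k → ℕ, (T a) α * ∏ i, z i ^ α i
        = ∑' α : Fin k → ℕ, a α * ∏ i, (φ z i) ^ α i)
    (hiso : ∀ a : Coeffk k, ‖T a‖ = ‖a‖) :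
    ∃ A : Fin k → Fin k → ℕ,
        Matrix.det (Matrix.of fun i j => (A i j : ℤ)) ≠ 0 ∧
        ∃ ε : Fin k → ℂ, (∀ i, ‖(ε i)‖ = 1) ∧
          ∀ z : Fin k → ℂ, (∀ i, ‖(z i)‖ < 1) →
            ∀ i, φ z i = ε i * ∏ j, z j ^ A i j := by
  classical
  set g : PP k → (PP k → ℂ) := fun α => ((T (lp.single 1 α 1) : Coeffk k) : PP k → ℂ) with hgdef
  have hg_sum : ∀ α, Summable fun β => ‖g α β‖ := fun α => coeffk_summable _
  have hsingle_norm : ∀ α : PP k, ‖(lp.single 1 α (1:ℂ) : Coeffk k)‖ = 1 := by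
    intro α
    have := lp.norm_single (E := fun _ : PP k => ℂ) (p := 1) (by norm_num) α (1:ℂ)
    simpa using this
  have hnorm1 : ∀ α, ∑' β, ‖g α β‖ = 1 := by
    intro α
    rw [← coeffk_norm, hiso, hsingle_norm]
  have hg_series : ∀ α (z : Fin k → ℂ), (∀ i, ‖(z i)‖ < 1) →
      ∑' β, g α β * ∏ i, z i ^ β i = ∏ i, (φ z i) ^ α i := by
    intro α z hz
    have h1 := hT (lp.single 1 α 1) z hz
    have h2 : ∑' β : PP k, (lp.single 1 α (1:ℂ) : PP k → ℂ) β * ∏ i, (φ z i) ^ β i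
        = ∏ i, (φ z i) ^ α i := by
      rw [tsum_eq_single α (fun β hβ => by rw [single_coe, if_neg hβ, zero_mul]),
        single_coe, if_pos rfl, one_mul]
    exact h1.trans h2
  -- disjointness of supports
  have hdisj : ∀ {α α' : PP k}, α ≠ α' → ∀ β, g α β = 0 ∨ g α' β = 0 := by
    intro α α' hne β
    have hcoe_add : ∀ β, ((lp.single 1 α (1:ℂ) + lp.single 1 α' 1 : Coeffk k) : PP k → ℂ) β
        = (if β = α then (1:ℂ) else 0) + (if β = α' then 1 else 0) := by
      intro β
      rw [lp.coeFn_add, Pi.add_apply, single_coe, single_coe]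
    have hcoe_sub : ∀ β, ((lp.single 1 α (1:ℂ) - lp.single 1 α' 1 : Coeffk k) : PP k → ℂ) β
        = (if β = α then (1:ℂ) else 0) - (if β = α' then 1 else 0) := by
      intro β
      rw [lp.coeFn_sub, Pi.sub_apply, single_coe, single_coe]
    have hnorm_pair_add : ‖(lp.single 1 α (1:ℂ) + lp.single 1 α' 1 : Coeffk k)‖ = 2 := by
      rw [coeffk_norm]
      rw [tsum_eq_sum (s := {α, α'}) (fun β hβ => by
        rw [hcoe_add β, if_neg (by simp at hβ; exact hβ.1), if_neg (by simp at hβ; exact hβ.2)]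
        simp)]
      rw [Finset.sum_pair hne]
      rw [hcoe_add α, hcoe_add α', if_pos rfl, if_pos rfl, if_neg hne, if_neg (Ne.symm hne)]
      norm_num
    have hnorm_pair_sub : ‖(lp.single 1 α (1:ℂ) - lp.single 1 α' 1 : Coeffk k)‖ = 2 := by
      rw [coeffk_norm]
      rw [tsum_eq_sum (s := {α, α'}) (fun β hβ => by
        rw [hcoe_sub β, if_neg (by simp at hβ; exact hβ.1), if_neg (by simp at hβ; exact hβ.2)]
        simp)]
      rw [Finset.sum_pair hne]
      rw [hcoe_sub α, hcoe_sub α', if_pos rfl, if_pos rfl, if_neg hne, if_neg (Ne.symm hne)]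
      norm_num
    have hTadd : ∀ β, ((T (lp.single 1 α 1 + lp.single 1 α' 1) : Coeffk k) : PP k → ℂ) β
        = g α β + g α' β := by
      intro β
      rw [map_add, lp.coeFn_add, Pi.add_apply]
    have hTsub : ∀ β, ((T (lp.single 1 α 1 - lp.single 1 α' 1) : Coeffk k) : PP k → ℂ) β
        = g α β - g α' β := by
      intro β
      rw [map_sub, lp.coeFn_sub, Pi.sub_apply]
    have hplus : ∑' β, ‖g α β + g α' β‖ = 2 := by
      have := hiso (lp.single 1 α 1 + lp.single 1 α' 1)
      rw [coeffk_norm, hnorm_pair_add] at this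
      rw [← tsum_congr fun β => congrArg norm (hTadd β)]
      exact this
    have hminus : ∑' β, ‖g α β - g α' β‖ = 2 := by
      have := hiso (lp.single 1 α 1 - lp.single 1 α' 1)
      rw [coeffk_norm, hnorm_pair_sub] at this
      rw [← tsum_congr fun β => congrArg norm (hTsub β)]
      exact this
    have hsum_add : ∑' β, (‖g α β‖ + ‖g α' β‖) = 2 := by
      rw [Summable.tsum_add (hg_sum α) (hg_sum α'), hnorm1, hnorm1]
      norm_num
    have hsummable_add : Summable fun β => ‖g α β + g α' β‖ :=
      Summable.of_nonneg_of_le (fun _ => norm_nonneg _) (fun β => norm_add_le _ _)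
        ((hg_sum α).add (hg_sum α'))
    have hsummable_sub : Summable fun β => ‖g α β - g α' β‖ :=
      Summable.of_nonneg_of_le (fun _ => norm_nonneg _) (fun β => norm_sub_le _ _)
        ((hg_sum α).add (hg_sum α'))
    have hpt_add := tsum_pointwise_eq _ _ (fun β => norm_add_le (g α β) (g α' β))
      hsummable_add ((hg_sum α).add (hg_sum α')) (by rw [hplus, hsum_add])
    have hpt_sub := tsum_pointwise_eq _ _ (fun β => norm_sub_le (g α β) (g α' β))
      hsummable_sub ((hg_sum α).add (hg_sum α')) (by rw [hminus, hsum_add])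
    exact abs_cancel _ _ (hpt_add β) (hpt_sub β)
  -- convolution identity
  have hconv : ∀ α α' β, g (α + α') β = conv (g α) (g α') β := by
    intro α α'
    have hcsum : Summable fun β => ‖conv (g α) (g α') β‖ :=
      Summable.of_nonneg_of_le (fun _ => norm_nonneg _)
        (fun β => convR_eq_norm_tsum (hg_sum α) (hg_sum α') β)
        (convR_summable (fun _ => norm_nonneg _) (fun _ => norm_nonneg _)
          (hg_sum α) (hg_sum α'))
    refine two_series_unique _ _ (hg_sum _) hcsum ?_
    intro z hz
    have hz1 : ∀ i, ‖(z i)‖ ≤ 1 := fun i => (hz i).le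
    rw [hg_series _ z hz]
    rw [← conv_series (hg_sum α) (hg_sum α') z hz1]
    rw [hg_series _ z hz, hg_series _ z hz]
    rw [← Finset.prod_mul_distrib]
    exact Finset.prod_congr rfl fun i _ => by rw [Pi.add_apply, pow_add]
  -- no cancellation
  have habs : ∀ α α' β, ‖g (α + α') β‖
      = convR (fun β => ‖g α β‖) (fun β => ‖g α' β‖) β := by
    intro α α'
    refine tsum_pointwise_eq _ _ ?_ (hg_sum _) ?_ ?_
    · intro β
      rw [hconv α α' β]
      exact convR_eq_norm_tsum (hg_sum α) (hg_sum α') β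
    · exact convR_summable (fun _ => norm_nonneg _) (fun _ => norm_nonneg _)
        (hg_sum α) (hg_sum α')
    · rw [hnorm1, convR_tsum (fun _ => norm_nonneg _) (fun _ => norm_nonneg _)
        (hg_sum α) (hg_sum α'), hnorm1, hnorm1]
      norm_num
  have hstep : ∀ α α' β γ, g α β ≠ 0 → g α' γ ≠ 0 → g (α + α') (β + γ) ≠ 0 := by
    intro α α' β γ hβ hγ
    have h1 : 0 < ‖g α β‖ * ‖g α' γ‖ :=
      mul_pos (norm_pos_iff.mpr hβ) (norm_pos_iff.mpr hγ)
    have h2 := convR_single_le (x := fun β => ‖g α β‖) (y := fun β => ‖g α' β‖)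
      (fun _ => norm_nonneg _) (fun _ => norm_nonneg _) (hg_sum α) (hg_sum α') β γ
    rw [← habs α α' (β + γ)] at h2
    exact norm_pos_iff.mp (lt_of_lt_of_le h1 h2)
  -- constant term
  have hg0 : ∀ β, g 0 β = if β = 0 then 1 else 0 := by
    refine two_series_unique _ _ (hg_sum 0) ?_ ?_
    · refine summable_of_ne_finset_zero (s := {(0 : PP k)}) ?_
      intro β hβ
      simp only [Finset.mem_singleton] at hβ
      show ‖if β = 0 then (1:ℂ) else 0‖ = 0
      rw [if_neg hβ, norm_zero]
    · intro z hz
      rw [hg_series 0 z hz]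
      rw [tsum_eq_single (0 : PP k) (fun β hβ => by rw [if_neg hβ, zero_mul])]
      simp
  have hg00 : g 0 0 ≠ 0 := by
    rw [hg0 0, if_pos rfl]
    exact one_ne_zero
  -- iterated products
  have hpow : ∀ α β, g α β ≠ 0 → ∀ α' γ, g α' γ ≠ 0 → ∀ n : ℕ,
      g (α + n • α') (β + n • γ) ≠ 0 := by
    intro α β hβ α' γ hγ n
    induction n with
    | zero => simpa using hβ
    | succ n ih =>
      have e1 : α + (n + 1) • α' = (α + n • α') + α' := by
        rw [succ_nsmul, ← add_assoc]
      have e2 : β + (n + 1) • γ = (β + n • γ) + γ := by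
        rw [succ_nsmul, ← add_assoc]
      rw [e1, e2]
      exact hstep _ _ _ _ ih hγ
  have hiter : ∀ (m : ℕ) (cc : Fin m → ℕ) (ι : Fin m → Fin k) (pt : Fin m → PP k),
      (∀ t, g (Pi.single (ι t) 1) (pt t) ≠ 0) →
      g (∑ t, cc t • Pi.single (ι t) 1) (∑ t, cc t • pt t) ≠ 0 := by
    intro m
    induction m with
    | zero =>
      intro cc ι pt _
      simpa using hg00
    | succ m ih =>
      intro cc ι pt hpt
      rw [Fin.sum_univ_succ, Fin.sum_univ_succ]
      rw [add_comm (cc 0 • Pi.single (ι 0) 1), add_comm (cc 0 • pt 0)]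
      exact hpow _ _ (ih (fun t => cc t.succ) (fun t => ι t.succ) (fun t => pt t.succ)
        (fun t => hpt t.succ)) _ _ (hpt 0) (cc 0)
  -- non-emptiness of supports
  have hnonzero : ∀ i, ∃ β, g (Pi.single i 1) β ≠ 0 := by
    intro i
    by_contra hz
    push_neg at hz
    have : ∑' β, ‖g (Pi.single i 1) β‖ = 0 := by
      rw [tsum_congr fun β => by rw [hz β, norm_zero]]
      exact tsum_zero
    rw [hnorm1] at this
    norm_num at this
  -- choose the support points
  choose AA hAA using hnonzero
  -- each support is a singleton
  have hsingleton : ∀ i (β γ : PP k), g (Pi.single i 1) β ≠ 0 → g (Pi.single i 1) γ ≠ 0 →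
      β = γ := by
    intro i β γ hβ hγ
    by_contra hne
    set s : Fin k → PP k := Function.update AA i β with hs
    have hsne : ∀ j, g (Pi.single j 1) (s j) ≠ 0 := by
      intro j
      by_cases hj : j = i
      · subst hj; rw [hs, Function.update_self]; exact hβ
      · rw [hs, Function.update_of_ne hj]; exact hAA j
    set W : Fin (k+1) → PP k := Fin.snoc s γ with hW
    set ι : Fin (k+1) → Fin k := Fin.snoc (fun j => j) i with hι
    have hWs : ∀ t, g (Pi.single (ι t) 1) (W t) ≠ 0 := by
      intro t
      refine Fin.lastCases ?_ ?_ t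
      · rw [hW, hι]
        simp only [Fin.snoc_last]
        exact hγ
      · intro j
        rw [hW, hι]
        simp only [Fin.snoc_castSucc]
        exact hsne j
    set v : Fin (k+1) → (Fin k → ℚ) := fun t j => (W t j : ℚ) with hv
    have hdep : ¬ LinearIndependent ℚ v := by
      intro hLI
      have hcard := hLI.fintype_card_le_finrank
      rw [Fintype.card_fin] at hcard
      have hrank : Module.finrank ℚ (Fin k → ℚ) = k := by simp
      omega
    obtain ⟨cq, hrel, t₀, ht₀⟩ := Fintype.not_linearIndependent_iff.mp hdep
    obtain ⟨mz, N, hNpos, hmz⟩ := intify cq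
    have hmzrel : ∑ t, (mz t : ℚ) • v t = 0 := by
      calc ∑ t, (mz t : ℚ) • v t = ∑ t, ((N : ℚ) * cq t) • v t :=
            Finset.sum_congr rfl fun t _ => by rw [hmz t]
        _ = (N : ℚ) • ∑ t, cq t • v t := by
            rw [Finset.smul_sum]
            exact Finset.sum_congr rfl fun t _ => by rw [mul_smul]
        _ = 0 := by rw [hrel, smul_zero]
    set aa : Fin (k+1) → ℕ := fun t => (mz t).toNat with haa
    set bb : Fin (k+1) → ℕ := fun t => (-(mz t)).toNat with hbb
    have hab : ∀ t, (aa t : ℤ) - bb t = mz t := fun t => Int.toNat_sub_toNat_neg (mz t)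
    have habQ : ∀ t, (mz t : ℚ) = (aa t : ℚ) - (bb t : ℚ) := by
      intro t
      have := hab t
      exact_mod_cast (congrArg (fun x : ℤ => (x : ℚ)) this).symm
    have hrelj : ∀ j, ∑ t, (mz t : ℚ) * v t j = 0 := by
      intro j
      have h5 := congrFun hmzrel j
      rw [Finset.sum_apply] at h5
      simp only [Pi.smul_apply, smul_eq_mul] at h5
      exact h5
    have hptQ : ∀ j, ∑ t, (aa t : ℚ) * W t j = ∑ t, (bb t : ℚ) * W t j := by
      intro j
      have h5 := hrelj j
      have h6 : ∑ t, ((aa t : ℚ) * W t j - (bb t : ℚ) * W t j) = 0 := by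
        rw [← h5]
        exact Finset.sum_congr rfl fun t _ => by rw [habQ t, hv]; ring
      rw [Finset.sum_sub_distrib] at h6
      linarith
    have hptN : ∑ t, aa t • W t = ∑ t, bb t • W t := by
      funext j
      have e1 : ((∑ t, aa t • W t) j : ℚ) = ∑ t, (aa t : ℚ) * W t j := by
        rw [Finset.sum_apply]
        push_cast
        exact Finset.sum_congr rfl fun t _ => by
          rw [Pi.smul_apply, smul_eq_mul]
          push_cast
          ring
      have e2 : ((∑ t, bb t • W t) j : ℚ) = ∑ t, (bb t : ℚ) * W t j := by
        rw [Finset.sum_apply]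
        push_cast
        exact Finset.sum_congr rfl fun t _ => by
          rw [Pi.smul_apply, smul_eq_mul]
          push_cast
          ring
      have := e1.trans ((hptQ j).trans e2.symm)
      exact_mod_cast this
    set αa : PP k := ∑ t, aa t • Pi.single (ι t) 1 with hαa
    set αb : PP k := ∑ t, bb t • Pi.single (ι t) 1 with hαb
    have hga : g αa (∑ t, aa t • W t) ≠ 0 := hiter (k+1) aa ι W hWs
    have hgb : g αb (∑ t, aa t • W t) ≠ 0 := by
      rw [hptN]
      exact hiter (k+1) bb ι W hWs
    have hαeq : αa = αb := by
      by_contra hne2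
      rcases hdisj hne2 (∑ t, aa t • W t) with h | h
      · exact hga h
      · exact hgb h
    -- coordinates of αa, αb
    have hcoords : ∀ (cc : Fin (k+1) → ℕ) (j : Fin k),
        ((∑ t, cc t • Pi.single (ι t) 1 : PP k)) j
          = cc (Fin.castSucc j) + cc (Fin.last k) * (if j = i then 1 else 0) := by
      intro cc j
      rw [Finset.sum_apply]
      rw [Fin.sum_univ_castSucc]
      congr 1
      · calc ∑ t : Fin k, ((cc t.castSucc • Pi.single (ι t.castSucc) 1 : PP k)) j
            = ∑ t : Fin k, (if j = t then cc t.castSucc else 0) := by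
              refine Finset.sum_congr rfl fun t _ => ?_
              simp only [hι, Fin.snoc_castSucc, Pi.smul_apply, smul_eq_mul, Pi.single_apply]
              by_cases h : j = t <;> simp [h]
          _ = cc (Fin.castSucc j) := by
              rw [Finset.sum_ite_eq]
              simp
      · show (cc (Fin.last k) • Pi.single (ι (Fin.last k)) 1 : PP k) j
            = cc (Fin.last k) * (if j = i then 1 else 0)
        simp only [hι, Fin.snoc_last, Pi.smul_apply, smul_eq_mul, Pi.single_apply]
    have hmz_off : ∀ j : Fin k, j ≠ i → mz (Fin.castSucc j) = 0 := by
      intro j hj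
      have := congrFun hαeq j
      rw [hαa, hαb, hcoords aa j, hcoords bb j, if_neg hj] at this
      simp only [mul_zero, add_zero] at this
      have := hab (Fin.castSucc j)
      omega
    have hmz_i : mz (Fin.castSucc i) + mz (Fin.last k) = 0 := by
      have := congrFun hαeq i
      rw [hαa, hαb, hcoords aa i, hcoords bb i, if_pos rfl] at this
      simp only [mul_one] at this
      have h1 := hab (Fin.castSucc i)
      have h2 := hab (Fin.last k)
      omega
    -- reduce the rational relation
    have hred : (mz (Fin.castSucc i) : ℚ) • v (Fin.castSucc i)
        + (mz (Fin.last k) : ℚ) • v (Fin.last k) = 0 := by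
      have h7 := hmzrel
      rw [Fin.sum_univ_castSucc] at h7
      rw [Finset.sum_eq_single i (fun t _ htne => by
        rw [hmz_off t htne, Int.cast_zero, zero_smul])
        (fun h => absurd (Finset.mem_univ i) h)] at h7
      exact h7
    have hcases : mz (Fin.last k) = 0 ∨ v (Fin.last k) = v (Fin.castSucc i) := by
      by_cases h0 : mz (Fin.last k) = 0
      · exact Or.inl h0
      · refine Or.inr ?_
        have hmi : (mz (Fin.castSucc i) : ℚ) = -(mz (Fin.last k) : ℚ) := by
          have : mz (Fin.castSucc i) = -(mz (Fin.last k)) := by omega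
          exact_mod_cast congrArg (fun x : ℤ => (x : ℚ)) this
        rw [hmi, neg_smul] at hred
        have h8 : (mz (Fin.last k) : ℚ) • (v (Fin.last k) - v (Fin.castSucc i)) = 0 := by
          rw [smul_sub]
          linear_combination (norm := module) hred
        rcases smul_eq_zero.mp h8 with h | h
        · exact absurd (by exact_mod_cast h) h0
        · exact sub_eq_zero.mp h
    rcases hcases with h0 | hvv
    · -- all mz vanish, contradiction with cq t₀ ≠ 0
      have hallzero : ∀ t, mz t = 0 := by
        intro t
        refine Fin.lastCases h0 (fun j => ?_) t
        by_cases hj : j = i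
        · subst hj; omega
        · exact hmz_off j hj
      have := hmz t₀
      rw [hallzero t₀, Int.cast_zero] at this
      have hN : (N : ℚ) ≠ 0 := by exact_mod_cast hNpos.ne'
      exact ht₀ (by
        rcases mul_eq_zero.mp this.symm with h | h
        · exact absurd h hN
        · exact h)
    · -- γ = β, contradiction
      refine hne ?_
      funext j
      have hWl : W (Fin.last k) = γ := by simp [hW]
      have hWi : W (Fin.castSucc i) = β := by
        simp only [hW, Fin.snoc_castSucc]
        rw [hs, Function.update_self]
      have h9 := congrFun hvv j
      simp only [hv] at h9
      rw [hWl, hWi] at h9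
      exact_mod_cast h9.symm
  -- supports are exactly the singletons {AA i}
  have hsupp0 : ∀ i (β : PP k), β ≠ AA i → g (Pi.single i 1) β = 0 := by
    intro i β hb
    by_contra h
    exact hb (hsingleton i β (AA i) h (hAA i))
  set ε : Fin k → ℂ := fun i => g (Pi.single i 1) (AA i) with hε
  have hεabs : ∀ i, ‖(ε i)‖ = 1 := by
    intro i
    have h1 := hnorm1 (Pi.single i 1)
    rw [tsum_eq_single (AA i) (fun β hβ => by rw [hsupp0 i β hβ, norm_zero])] at h1
    exact h1
  have hφeq : ∀ z : Fin k → ℂ, (∀ i, ‖(z i)‖ < 1) →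
      ∀ i, φ z i = ε i * ∏ j, z j ^ AA i j := by
    intro z hz i
    have h1 := hg_series (Pi.single i 1) z hz
    have h2 : ∏ j, (φ z j) ^ (Pi.single i (1:ℕ) j) = φ z i := by
      calc ∏ j, (φ z j) ^ (Pi.single i (1:ℕ) j)
          = ∏ j, (if j = i then φ z j else 1) := by
            refine Finset.prod_congr rfl fun j _ => ?_
            rw [Pi.single_apply]
            by_cases h : j = i <;> simp [h]
        _ = φ z i := by
            rw [Finset.prod_ite_eq' Finset.univ i (fun j => φ z j)]
            simp
    have h3 : ∑' β, g (Pi.single i 1) β * ∏ j, z j ^ β j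
        = ε i * ∏ j, z j ^ AA i j := by
      rw [tsum_eq_single (AA i) (fun β hβ => by rw [hsupp0 i β hβ, zero_mul])]
    rw [← h2, ← h1, h3]
  -- determinant is nonzero
  have hdet : Matrix.det (Matrix.of fun i j => (AA i j : ℤ)) ≠ 0 := by
    intro hdet0
    set MQ : Matrix (Fin k) (Fin k) ℚ := Matrix.of fun i j => (AA i j : ℚ) with hMQ
    have hdetQ0 : MQ.det = 0 := by
      have hmap : (Int.castRingHom ℚ).mapMatrix (Matrix.of fun i j => (AA i j : ℤ)) = MQ := by
        ext i j
        simp [hMQ]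
      have h1 := RingHom.map_det (Int.castRingHom ℚ) (Matrix.of fun i j => (AA i j : ℤ))
      rw [hmap] at h1
      have h2 : (((Matrix.of fun i j => (AA i j : ℤ)).det : ℤ) : ℚ) = MQ.det := h1
      rw [← h2, hdet0]
      norm_num
    have hnLI : ¬ LinearIndependent ℚ (fun i => MQ i) := by
      intro hLI
      have h1 := (Matrix.isUnit_iff_isUnit_det MQ).mp
        (Matrix.linearIndependent_rows_iff_isUnit.mp hLI)
      rw [hdetQ0] at h1
      exact not_isUnit_zero h1
    obtain ⟨cq, hrel, t₀, ht₀⟩ := Fintype.not_linearIndependent_iff.mp hnLI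
    obtain ⟨mz, N, hNpos, hmz⟩ := intify cq
    have hmzrel : ∑ t, (mz t : ℚ) • MQ t = 0 := by
      calc ∑ t, (mz t : ℚ) • MQ t = ∑ t, ((N : ℚ) * cq t) • MQ t :=
            Finset.sum_congr rfl fun t _ => by rw [hmz t]
        _ = (N : ℚ) • ∑ t, cq t • MQ t := by
            rw [Finset.smul_sum]
            exact Finset.sum_congr rfl fun t _ => by rw [mul_smul]
        _ = 0 := by rw [hrel, smul_zero]
    set aa : Fin k → ℕ := fun t => (mz t).toNat with haa
    set bb : Fin k → ℕ := fun t => (-(mz t)).toNat with hbb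
    have hab : ∀ t, (aa t : ℤ) - bb t = mz t := fun t => Int.toNat_sub_toNat_neg (mz t)
    have habQ : ∀ t, (mz t : ℚ) = (aa t : ℚ) - (bb t : ℚ) := by
      intro t
      have := hab t
      exact_mod_cast (congrArg (fun x : ℤ => (x : ℚ)) this).symm
    have hrelj : ∀ j, ∑ t, (mz t : ℚ) * (AA t j : ℚ) = 0 := by
      intro j
      have h5 := congrFun hmzrel j
      rw [Finset.sum_apply] at h5
      simp only [Pi.smul_apply, smul_eq_mul] at h5
      exact h5
    have hptN : ∑ t, aa t • AA t = ∑ t, bb t • AA t := by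
      funext j
      have h6 : ∑ t, ((aa t : ℚ) * AA t j - (bb t : ℚ) * AA t j) = 0 := by
        rw [← hrelj j]
        exact Finset.sum_congr rfl fun t _ => by rw [habQ t]; ring
      rw [Finset.sum_sub_distrib] at h6
      have e1 : ((∑ t, aa t • AA t) j : ℚ) = ∑ t, (aa t : ℚ) * AA t j := by
        rw [Finset.sum_apply]
        push_cast
        exact Finset.sum_congr rfl fun t _ => by
          rw [Pi.smul_apply, smul_eq_mul]
          push_cast
          ring
      have e2 : ((∑ t, bb t • AA t) j : ℚ) = ∑ t, (bb t : ℚ) * AA t j := by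
        rw [Finset.sum_apply]
        push_cast
        exact Finset.sum_congr rfl fun t _ => by
          rw [Pi.smul_apply, smul_eq_mul]
          push_cast
          ring
      have : ((∑ t, aa t • AA t) j : ℚ) = ((∑ t, bb t • AA t) j : ℚ) := by
        rw [e1, e2]
        linarith
      exact_mod_cast this
    have hga : g (∑ t, aa t • Pi.single t 1) (∑ t, aa t • AA t) ≠ 0 :=
      hiter k aa id AA (fun t => hAA t)
    have hgb : g (∑ t, bb t • Pi.single t 1) (∑ t, aa t • AA t) ≠ 0 := by
      rw [hptN]
      exact hiter k bb id AA (fun t => hAA t)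
    have hαeq : (∑ t, aa t • Pi.single t 1 : PP k) = ∑ t, bb t • Pi.single t 1 := by
      by_contra hne2
      rcases hdisj hne2 (∑ t, aa t • AA t) with h | h
      · exact hga h
      · exact hgb h
    have haabb : ∀ j, aa j = bb j := by
      intro j
      have h7 := congrFun hαeq j
      have hcc : ∀ (cc : Fin k → ℕ), ((∑ t, cc t • Pi.single t 1 : PP k)) j = cc j := by
        intro cc
        rw [Finset.sum_apply]
        calc ∑ t, (cc t • Pi.single t (1:ℕ)) j
            = ∑ t, (if j = t then cc t else 0) := by
              refine Finset.sum_congr rfl fun t _ => ?_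
              rw [Pi.smul_apply, smul_eq_mul, Pi.single_apply]
              by_cases h : j = t <;> simp [h]
          _ = cc j := by
              rw [Finset.sum_ite_eq]
              simp
      rw [hcc aa, hcc bb] at h7
      exact h7
    have hallzero : ∀ t, mz t = 0 := by
      intro t
      have := hab t
      have := haabb t
      omega
    have := hmz t₀
    rw [hallzero t₀, Int.cast_zero] at this
    have hN : (N : ℚ) ≠ 0 := by exact_mod_cast hNpos.ne'
    refine ht₀ ?_
    rcases mul_eq_zero.mp this.symm with h | h
    · exact absurd h hN
    · exact h
  exact ⟨fun i => AA i, hdet, ε, hεabs, hφeq⟩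




lemma reverse_dir (k : ℕ) (φ : (Fin k → ℂ) → (Fin k → ℂ))
    (T : Coeffk k →L[ℂ] Coeffk k)
    (hT : ∀ (a : Coeffk k) (z : Fin k → ℂ), (∀ i, ‖(z i)‖ < 1) →
      ∑' α : Fin k → ℕ, (T a) α * ∏ i, z i ^ α i
        = ∑' α : Fin k → ℕ, a α * ∏ i, (φ z i) ^ α i)
    (A : Fin k → Fin k → ℕ)
    (hdet : Matrix.det (Matrix.of fun i j => (A i j : ℤ)) ≠ 0)
    (ε : Fin k → ℂ) (hε : ∀ i, ‖(ε i)‖ = 1)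
    (hφ : ∀ z : Fin k → ℂ, (∀ i, ‖(z i)‖ < 1) →
      ∀ i, φ z i = ε i * ∏ j, z j ^ A i j)
    (a : Coeffk k) : ‖T a‖ = ‖a‖ := by
  classical
  set σ : PP k → PP k := fun α j => ∑ i, α i * A i j with hσ
  set M : Matrix (Fin k) (Fin k) ℚ := Matrix.of fun i j => (A i j : ℚ) with hM
  have hdetQ : M.det ≠ 0 := by
    have hmap : (Int.castRingHom ℚ).mapMatrix (Matrix.of fun i j => (A i j : ℤ)) = M := by
      ext i j
      simp [hM]
    have h1 := RingHom.map_det (Int.castRingHom ℚ) (Matrix.of fun i j => (A i j : ℤ))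
    rw [hmap] at h1
    have h2 : (((Matrix.of fun i j => (A i j : ℤ)).det : ℤ) : ℚ) = M.det := h1
    rw [← h2]
    exact_mod_cast hdet
  have hLI : LinearIndependent ℚ (fun i => M i) :=
    Matrix.linearIndependent_rows_iff_isUnit.mpr
      ((Matrix.isUnit_iff_isUnit_det M).mpr (isUnit_iff_ne_zero.mpr hdetQ))
  have hσinj : Function.Injective σ := by
    intro α α' hσe
    have hco := Fintype.linearIndependent_iff.mp hLI (fun i => (α i : ℚ) - (α' i : ℚ)) ?_
    · funext i
      have h3 := hco i
      have : (α i : ℚ) = (α' i : ℚ) := by linarith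
      exact_mod_cast this
    · funext j
      rw [Finset.sum_apply]
      have hj : ∑ i, (α i : ℚ) * A i j = ∑ i, (α' i : ℚ) * A i j := by
        have h4 := congrFun hσe j
        simp only [hσ] at h4
        exact_mod_cast h4
      simp only [Pi.smul_apply, smul_eq_mul, hM, Matrix.of_apply]
      calc ∑ i, ((α i : ℚ) - (α' i : ℚ)) * (A i j : ℚ)
          = (∑ i, (α i : ℚ) * A i j) - ∑ i, (α' i : ℚ) * A i j := by
            rw [← Finset.sum_sub_distrib]
            exact Finset.sum_congr rfl fun i _ => by ring
        _ = 0 := by rw [hj, sub_self]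
  set u : PP k → ℂ := fun α => (∏ i, ε i ^ α i) * a α with hu
  have hu_abs : ∀ α, ‖u α‖ = ‖(a : PP k → ℂ) α‖ := by
    intro α
    simp only [hu, norm_mul]
    have : ‖∏ i, ε i ^ α i‖ = 1 := by
      rw [norm_prod]
      refine Finset.prod_eq_one fun i _ => ?_
      rw [norm_pow, hε i, one_pow]
    rw [this, one_mul]
  set c : PP k → ℂ := Function.extend σ u (fun _ => 0) with hc
  have hcσ : ∀ α, c (σ α) = u α := fun α => hσinj.extend_apply u (fun _ => 0) α
  have hcrange : ∀ β ∉ Set.range σ, c β = 0 := by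
    intro β hβ
    rw [hc, Function.extend_apply' u (fun _ => 0) β (by simpa [Set.range] using hβ)]
  have hcsum : Summable fun β => ‖c β‖ := by
    refine (hσinj.summable_iff (f := fun β => ‖c β‖) ?_).mp ?_
    · intro β hβ
      show ‖c β‖ = 0
      rw [hcrange β hβ, norm_zero]
    · show Summable fun α => ‖c (σ α)‖
      have : (fun α => ‖c (σ α)‖) = fun α => ‖(a : PP k → ℂ) α‖ := by
        funext α; rw [hcσ, hu_abs]
      rw [this]
      exact coeffk_summable a
  have hctsum : ∑' β, ‖c β‖ = ∑' α, ‖(a : PP k → ℂ) α‖ := by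
    rw [← hσinj.tsum_eq (f := fun β => ‖c β‖) ?_]
    · exact tsum_congr fun α => by rw [hcσ, hu_abs]
    · intro β hβ
      by_contra hr
      exact (Function.mem_support.mp hβ)
        (show ‖c β‖ = 0 by rw [hcrange β hr, norm_zero])
  -- power series identity
  have hc_series : ∀ z : Fin k → ℂ, (∀ i, ‖(z i)‖ < 1) →
      ∑' β : PP k, c β * ∏ i, z i ^ β i = ∑' α : PP k, a α * ∏ i, (φ z i) ^ α i := by
    intro z hz
    rw [← hσinj.tsum_eq (f := fun β => c β * ∏ i, z i ^ β i) ?_]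
    · refine tsum_congr fun α => ?_
      have hφα : ∏ i, (φ z i) ^ α i = ∏ i, (ε i * ∏ j, z j ^ A i j) ^ α i :=
        Finset.prod_congr rfl fun i _ => by rw [hφ z hz i]
      have key : ∏ i, (ε i * ∏ j, z j ^ A i j) ^ α i
          = (∏ i, ε i ^ α i) * ∏ j, z j ^ (σ α j) := by
        calc ∏ i, (ε i * ∏ j, z j ^ A i j) ^ α i
            = ∏ i, (ε i ^ α i * (∏ j, z j ^ A i j) ^ α i) :=
              Finset.prod_congr rfl fun i _ => mul_pow _ _ _
          _ = (∏ i, ε i ^ α i) * ∏ i, (∏ j, z j ^ A i j) ^ α i := Finset.prod_mul_distrib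
          _ = (∏ i, ε i ^ α i) * ∏ j, z j ^ (σ α j) := by
              congr 1
              calc ∏ i, (∏ j, z j ^ A i j) ^ α i
                  = ∏ i, ∏ j, z j ^ (A i j * α i) := by
                    refine Finset.prod_congr rfl fun i _ => ?_
                    rw [← Finset.prod_pow]
                    exact Finset.prod_congr rfl fun j _ => by rw [← pow_mul]
                _ = ∏ j, ∏ i, z j ^ (A i j * α i) := Finset.prod_comm
                _ = ∏ j, z j ^ (∑ i, A i j * α i) :=
                    Finset.prod_congr rfl fun j _ => Finset.prod_pow_eq_pow_sum _ _ _
                _ = ∏ j, z j ^ (σ α j) := by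
                    refine Finset.prod_congr rfl fun j _ => ?_
                    congr 1
                    simp only [hσ]
                    exact Finset.sum_congr rfl fun i _ => Nat.mul_comm _ _
      rw [hcσ, hφα, key, hu]
      ring
    · intro β hβ
      by_contra hr
      exact (Function.mem_support.mp hβ)
        (show c β * ∏ i, z i ^ β i = 0 by rw [hcrange β hr, zero_mul])
  have hTa : ∀ β, (T a : PP k → ℂ) β = c β := by
    refine two_series_unique _ _ (coeffk_summable (T a)) hcsum ?_
    intro z hz
    rw [hT a z hz, hc_series z hz]
  calc ‖T a‖ = ∑' β, ‖(T a : PP k → ℂ) β‖ := coeffk_norm _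
    _ = ∑' β, ‖c β‖ := tsum_congr fun β => by rw [hTa β]
    _ = ∑' α, ‖(a : PP k → ℂ) α‖ := hctsum
    _ = ‖a‖ := (coeffk_norm a).symm


end Aux13

/-- Theorem 4.1.  Let `φ = (φ₁,…,φ_k) : 𝔻^k → 𝔻̄^k` be analytic,
inducing a composition operator `C_φ` on `A⁺(𝕋^k)` (`T` is `C_φ` on coefficient
families).  Then `C_φ` is an isometry iff there are a `k×k` matrix `A = (a_{ij})` of
non-negative integers with `det A ≠ 0` and unimodular `ε₁,…,ε_k` such that
`φ_i(z) = ε_i z₁^{a_{i1}} ⋯ z_k^{a_{ik}}` on `𝔻^k`. -/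
theorem statement_13 (k : ℕ) (hk : 0 < k) (φ : (Fin k → ℂ) → (Fin k → ℂ))
    (hanal : DifferentiableOn ℂ φ {z : Fin k → ℂ | ∀ i, ‖z i‖ < 1})
    (hmaps : ∀ z : Fin k → ℂ, (∀ i, ‖z i‖ < 1) →
      ∀ i, ‖φ z i‖ ≤ 1)
    (T : Coeffk k →L[ℂ] Coeffk k)
    (hT : ∀ (a : Coeffk k) (z : Fin k → ℂ), (∀ i, ‖z i‖ < 1) →
      ∑' α : Fin k → ℕ, (T a) α * ∏ i, z i ^ α i
        = ∑' α : Fin k → ℕ, a α * ∏ i, (φ z i) ^ α i) :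
    (∀ a : Coeffk k, ‖T a‖ = ‖a‖) ↔
      ∃ A : Fin k → Fin k → ℕ,
        Matrix.det (Matrix.of fun i j => (A i j : ℤ)) ≠ 0 ∧
        ∃ ε : Fin k → ℂ, (∀ i, ‖ε i‖ = 1) ∧
          ∀ z : Fin k → ℂ, (∀ i, ‖z i‖ < 1) →
            ∀ i, φ z i = ε i * ∏ j, z j ^ A i j := by
  constructor
  · intro hiso
    exact Aux13.forward_dir k φ T hT hiso
  · rintro ⟨A, hdet, ε, hε, hφ⟩ a
    exact Aux13.reverse_dir k φ T hT A hdet ε hε hφ a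
end
end

section
/- Let φ = (φ₁,…,φ_k), where each φ_i ∈ A⁺(𝕋^k) is of the form φ_i = ε_i F_i with ε_i a complex number of modulus 1 and F_i having all coefficients nonnegative (so that no cancellation of coefficients occurs in products). If at least one φ_i is not a monomial (i.e. its spectrum Sp φ_i contains at least two multi-indices), then there exist distinct multi-indices α, α' ∈ ℕ₀^k such that the spectra of φ^α and φ^{α'} intersect, where φ^α := ∏_{i=1}^k φ_i^{α_i}. -/
open Complex

noncomputable section

/-- Membership in the spectrum of the product `φ^α = ∏ i, φ_i^{α_i}`, where `φ_i` has
coefficient family `p i` with no cancellation in products (coefficients unimodular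
multiples of non-negative reals): `β` is in the spectrum of `φ^α` iff it is a sum of
`α i` spectrum elements of `φ_i` over all `i`. -/
def MemSpecPow {k : ℕ} (p : Fin k → (Fin k → ℕ) → ℂ) (α β : Fin k → ℕ) : Prop :=
  ∃ c : (i : Fin k) → Fin (α i) → (Fin k → ℕ),
    (∀ i t, p i (c i t) ≠ 0) ∧ β = ∑ i, ∑ t, c i t

lemma sum_fin_ite {M : Type*} [AddCommMonoid M] {n a : ℕ} (h : a ≤ n) (x y : M) :
    ∑ t : Fin n, (if (t : ℕ) < a then x else y) = a • x + (n - a) • y := by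
  obtain ⟨b, rfl⟩ := Nat.exists_eq_add_of_le h
  rw [Fin.sum_univ_add]
  simp [Fin.is_lt, Nat.not_lt.mpr (Nat.le_add_right a _)]

lemma mem_aux {k : ℕ} (p : Fin k → (Fin k → ℕ) → ℂ) (i₀ : Fin k)
    (γ' : Fin k → (Fin k → ℕ)) (β₁ : Fin k → ℕ)
    (hγ' : ∀ i, p i (γ' i) ≠ 0) (hβ₁ : p i₀ β₁ ≠ 0) (z : Fin (k+1) → ℕ) :
    MemSpecPow p (fun i => z (Fin.castSucc i) + (if i = i₀ then z (Fin.last k) else 0))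
      (∑ j, z j • (Fin.snoc γ' β₁ : Fin (k+1) → Fin k → ℕ) j) := by
  set α : Fin k → ℕ := fun i => z (Fin.castSucc i) + (if i = i₀ then z (Fin.last k) else 0)
    with hα
  refine ⟨fun i t => if (t : ℕ) < z (Fin.castSucc i) then γ' i else β₁, ?_, ?_⟩
  · intro i t
    by_cases ht : (t : ℕ) < z (Fin.castSucc i)
    · simpa [ht] using hγ' i
    · have hti := t.is_lt
      by_cases hi : i = i₀
      · subst hi; simpa [ht] using hβ₁
      · simp only [hα, hi, if_neg, ite_false, add_zero] at hti; omega
  · have key : ∀ i : Fin k,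
        ∑ t : Fin (α i), (if (t : ℕ) < z (Fin.castSucc i) then γ' i else β₁)
          = z (Fin.castSucc i) • γ' i + (if i = i₀ then z (Fin.last k) else 0) • β₁ := by
      intro i
      rw [sum_fin_ite (Nat.le_add_right _ _)]
      congr 1
      congr 1
      simp [hα]
    rw [Fin.sum_univ_castSucc (f := fun j => z j • (Fin.snoc γ' β₁ : Fin (k+1) → Fin k → ℕ) j)]
    simp only [key, Fin.snoc_castSucc, Fin.snoc_last, Finset.sum_add_distrib, ite_smul,
      zero_smul, Finset.sum_ite_eq', Finset.mem_univ, if_true]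

/-- Lemma 4.3.  Let `φ = (φ₁,…,φ_k)` with each `φ_i ∈ A⁺(𝕋^k)`
(coefficient family `p i`, absolutely summable) of the form `φ_i = ε_i F_i`, where
`|ε_i| = 1` and `F_i` has non-negative coefficients (so no cancellation of coefficients
occurs in products), and each `φ_i ≠ 0`.  If some `φ_i` is not a monomial (its spectrum
contains two distinct multi-indices), then there are distinct multi-indices `α ≠ α'`
such that the spectra of `φ^α` and `φ^{α'}` intersect. -/
theorem statement_15 (k : ℕ) (p : Fin k → (Fin k → ℕ) → ℂ) (ε : Fin k → ℂ)
    (hsum : ∀ i, Summable fun β : Fin k → ℕ => ‖p i β‖)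
    (hε : ∀ i, ‖ε i‖ = 1)
    (hnonneg : ∀ i β, ∃ r : ℝ, 0 ≤ r ∧ p i β = ε i * (r : ℂ))
    (hne : ∀ i, ∃ β, p i β ≠ 0)
    (hnotmono : ∃ i, ∃ β β' : Fin k → ℕ, β ≠ β' ∧ p i β ≠ 0 ∧ p i β' ≠ 0) :
    ∃ α α' : Fin k → ℕ, α ≠ α' ∧
      ∃ β : Fin k → ℕ, MemSpecPow p α β ∧ MemSpecPow p α' β := by
  obtain ⟨i₀, β₀, β₁, hβne, hpβ₀, hpβ₁⟩ := hnotmono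
  choose γ hγ using hne
  set γ' : Fin k → (Fin k → ℕ) := fun i => if i = i₀ then β₀ else γ i with hγ'def
  have hγ' : ∀ i, p i (γ' i) ≠ 0 := by
    intro i; by_cases hi : i = i₀
    · subst hi; simpa [hγ'def] using hpβ₀
    · simpa [hγ'def, hi] using hγ i
  set u : Fin (k+1) → Fin k → ℕ := Fin.snoc γ' β₁ with hu
  set v : Fin (k+1) → Fin k → ℤ := fun j i => (u j i : ℤ) with hv
  -- k+1 vectors in ℤ^k are linearly dependent
  have hdep : ¬ LinearIndependent ℤ v := by
    intro h
    have := h.fintype_card_le_finrank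
    simp [Module.finrank_fintype_fun_eq_card] at this
  obtain ⟨g, hg0, j₀, hj₀⟩ := Fintype.not_linearIndependent_iff.mp hdep
  have hco : ∀ i : Fin k, ∑ j, g j * (u j i : ℤ) = 0 := by
    intro i
    have := congrFun hg0 i
    simpa [Finset.sum_apply] using this
  set zp : Fin (k+1) → ℕ := fun j => (g j).toNat with hzp
  set zm : Fin (k+1) → ℕ := fun j => (-(g j)).toNat with hzm
  have hgz : ∀ j, (zp j : ℤ) - (zm j : ℤ) = g j := fun j => Int.toNat_sub_toNat_neg (g j)
  -- the two ℕ-linear combinations agree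
  have hBeq : (∑ j, zp j • u j) = (∑ j, zm j • u j) := by
    funext i
    have h1 : ((∑ j, zp j • u j) i : ℤ) = ((∑ j, zm j • u j) i : ℤ) := by
      simp only [Finset.sum_apply, Pi.smul_apply, smul_eq_mul, Nat.cast_sum, Nat.cast_mul]
      rw [← sub_eq_zero, ← Finset.sum_sub_distrib]
      calc ∑ j, ((zp j : ℤ) * (u j i) - (zm j : ℤ) * (u j i))
          = ∑ j, g j * (u j i : ℤ) := by
            refine Finset.sum_congr rfl fun j _ => ?_
            rw [← sub_mul, hgz]
        _ = 0 := hco i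
    exact_mod_cast h1
  refine ⟨fun i => zp (Fin.castSucc i) + (if i = i₀ then zp (Fin.last k) else 0),
    fun i => zm (Fin.castSucc i) + (if i = i₀ then zm (Fin.last k) else 0), ?_, ?_⟩
  · -- α ≠ α'
    intro heq
    have hptm : ∀ j, zp j = zm j → g j = 0 := by
      intro j h; simp only [hzp, hzm] at h; omega
    have hne' : ∀ i : Fin k, i ≠ i₀ → g (Fin.castSucc i) = 0 := by
      intro i hi
      have := congrFun heq i
      simp only [hi, if_neg, ite_false, add_zero] at this
      exact hptm _ this
    have hsum2 : g (Fin.castSucc i₀) + g (Fin.last k) = 0 := by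
      have := congrFun heq i₀
      simp only [ite_true, if_pos rfl] at this
      have h1 := hgz (Fin.castSucc i₀)
      have h2 := hgz (Fin.last k)
      omega
    by_cases hc : g (Fin.castSucc i₀) = 0
    · -- then all g j = 0, contradicting hj₀
      apply hj₀
      rcases Fin.eq_castSucc_or_eq_last j₀ with ⟨i, rfl⟩ | rfl
      · by_cases hi : i = i₀
        · subst hi; exact hc
        · exact hne' i hi
      · omega
    · -- then β₀ = β₁
      apply hβne
      funext i
      have h := hco i
      rw [Fin.sum_univ_castSucc (f := fun j => g j * (u j i : ℤ))] at h
      rw [Finset.sum_eq_single i₀ (fun b _ hb => by rw [hne' b hb]; ring)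
        (fun h => absurd (Finset.mem_univ i₀) h)] at h
      have hui : u (Fin.castSucc i₀) i = β₀ i := by simp [hu, hγ'def]
      have hul : u (Fin.last k) i = β₁ i := by simp [hu]
      rw [hui, hul] at h
      have hgl : g (Fin.last k) = - g (Fin.castSucc i₀) := by omega
      rw [hgl] at h
      have : g (Fin.castSucc i₀) * ((β₀ i : ℤ) - (β₁ i : ℤ)) = 0 := by ring_nf; ring_nf at h; linarith
      rcases mul_eq_zero.mp this with h' | h'
      · exact absurd h' hc
      · have : (β₀ i : ℤ) = (β₁ i : ℤ) := by linarith
        exact_mod_cast this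
  · exact ⟨∑ j, zp j • u j, mem_aux p i₀ γ' β₁ hγ' hpβ₁ zp,
      hBeq ▸ mem_aux p i₀ γ' β₁ hγ' hpβ₁ zm⟩
end
end
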